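/- Let y be an even nonnegative integer, b a nonnegative integer, x=2b+1, and let U, D, B ⊆ {1,…,⌊N/2⌋} with n=|U∪D|, |B|=b, N=2b+1+y+2n and B∩(U∪D)=∅. Write u=|U|, d=|D|, m=2n−u−d, D̄={N+1−t : t∈D}, O := (U∪D∪B) ∪ {N+1−w : w ∈ U∪D∪B} and O^c := {1,…,N}∖O, and assume the central position (N+1)/2 does not belong to U∪D∪B. Then M_c(CS_{2b+1,y}(U;D;B)) = M(T_{y+u+d, 2b+1+m}((O^c∖{(N+1)/2}) ∪ U ∪ D̄)), i.e. the number of centrally symmetric lozenge tilings of CS_{2b+1,y}(U;D;B) equals the number of lozenge tilings of the dented semihexagon with north side 2b+1+m, slanted sides y+u+d, base N, and dents at the positions of (O^c∖{(N+1)/2}) ∪ U ∪ D̄. -/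

import Mathlib

open Finset

namespace Shuf

/-- A unit triangle of the triangular lattice: `(a, b, o)` where `o = false` is the
up-pointing unit triangle with vertices `(a,b), (a+1,b), (a,b+1)` (in the lattice
coordinates whose embedding is `(a,b) ↦ (a + b/2, b·√3/2)`), and `o = true` is the
down-pointing unit triangle with vertices `(a+1,b), (a,b+1), (a+1,b+1)`. -/
abbrev Tri : Type := ℤ × ℤ × Bool

/-- Adjacency from an up-pointing triangle `s` to a down-pointing triangle `t`
(sharing a unit edge). -/
def adjUD (s t : Tri) : Prop :=
  s.2.2 = false ∧ t.2.2 = true ∧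
    ((t.1 = s.1 ∧ t.2.1 = s.2.1) ∨ (t.1 = s.1 - 1 ∧ t.2.1 = s.2.1) ∨
      (t.1 = s.1 ∧ t.2.1 = s.2.1 - 1))

/-- Two unit triangles share a unit edge (form a lozenge). -/
def adj (s t : Tri) : Prop := adjUD s t ∨ adjUD t s

/-- A lozenge tiling of the region `R` with barrier edges `Bar`, encoded as the
involution pairing each unit triangle of `R` with the one it is matched to. -/
def IsTiling (R : Set Tri) (Bar : Set (Tri × Tri)) (f : Tri → Tri) : Prop :=
  (∀ t, t ∉ R → f t = t) ∧
    ∀ t ∈ R, f t ∈ R ∧ adj t (f t) ∧ f (f t) = t ∧ (t, f t) ∉ Bar ∧ (f t, t) ∉ Bar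

/-- `M R Bar` : the number of lozenge tilings of the region `R` with barriers `Bar`. -/
noncomputable def M (R : Set Tri) (Bar : Set (Tri × Tri)) : ℕ :=
  Nat.card {f : Tri → Tri // IsTiling R Bar f}

/-- 180° rotation about the point `(c.1/2, c.2/2)` (lattice coordinates). -/
def rot (c : ℤ × ℤ) (t : Tri) : Tri := (c.1 - t.1 - 1, c.2 - t.2.1 - 1, !t.2.2)

/-- `Mc c R Bar` : the number of lozenge tilings of `R` invariant under the 180°
rotation about the point `(c.1/2, c.2/2)`. -/
noncomputable def Mc (c : ℤ × ℤ) (R : Set Tri) (Bar : Set (Tri × Tri)) : ℕ :=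
  Nat.card {f : Tri → Tri // IsTiling R Bar f ∧ ∀ t, f (rot c t) = rot c (f t)}

/-- The doubly-dented hexagon whose horizontal axis (at height `0`) runs from the
west vertex `(0,0)` to the east vertex `(L,0)`, whose upper half is a trapezoid of
height `hu` and whose lower half is a trapezoid of height `hd`; the up-pointing unit
triangle just above the axis at position `i` is removed for `i ∈ U`, and the
down-pointing one just below the axis at position `i` is removed for `i ∈ D`
(positions are labelled `1,…,L` from left to right). -/
def HRegion (L hu hd : ℤ) (U D : Set ℤ) : Set Tri :=
  {t | (t.2.2 = false ∧ 0 ≤ t.2.1 ∧ t.2.1 < hu ∧ 0 ≤ t.1 ∧ t.1 + t.2.1 ≤ L - 1 ∧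
          (t.2.1 = 0 → t.1 + 1 ∉ U)) ∨
       (t.2.2 = true ∧ 0 ≤ t.2.1 ∧ t.2.1 < hu ∧ 0 ≤ t.1 ∧ t.1 + t.2.1 ≤ L - 2) ∨
       (t.2.2 = false ∧ -hd ≤ t.2.1 ∧ t.2.1 ≤ -1 ∧ -t.2.1 ≤ t.1 ∧ t.1 ≤ L - 1) ∨
       (t.2.2 = true ∧ -hd ≤ t.2.1 ∧ t.2.1 ≤ -1 ∧ -t.2.1 - 1 ≤ t.1 ∧ t.1 ≤ L - 1 ∧
          (t.2.1 = -1 → t.1 + 1 ∉ D))}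

/-- The barrier edges along the axis at the positions of `B`: the barrier at
position `i` forbids the vertical lozenge formed by the up-triangle just above and
the down-triangle just below the `i`-th unit segment of the axis. -/
def HBar (B : Set ℤ) : Set (Tri × Tri) :=
  {e | ∃ i ∈ B, e = ((i - 1, 0, false), (i - 1, -1, true)) ∨
                 e = ((i - 1, -1, true), (i - 1, 0, false))}

/-- `MH x y U D B` : the number of lozenge tilings of the doubly-dented hexagon
`H_{x,y}(U; D; B)`. -/
noncomputable def MH (x y : ℕ) (U D B : Finset ℤ) : ℕ :=
  M (HRegion (x + y + (U ∪ D).card) (y + U.card) (y + D.card) ↑U ↑D) (HBar ↑B)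

/-- `mir N W = {N + 1 - w : w ∈ W}`, the reflection of an index set. -/
def mir (N : ℤ) (W : Finset ℤ) : Finset ℤ := W.image (fun w => N + 1 - w)

/-- `MCS x y U D B` : the number of lozenge tilings of the centrally symmetric
doubly-dented hexagon `CS_{x,y}(U; D; B) = H_{x,y}(U ∪ D̄; D ∪ Ū; B ∪ B̄)`,
where `N = x + y + 2|U ∪ D|` and `W̄ = {N+1-w : w ∈ W}`. -/
noncomputable def MCS (x y : ℕ) (U D B : Finset ℤ) : ℕ :=
  MH x y (U ∪ mir (x + y + 2 * (U ∪ D).card) D) (D ∪ mir (x + y + 2 * (U ∪ D).card) U)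
    (B ∪ mir (x + y + 2 * (U ∪ D).card) B)

/-- `McCS x y U D B` : the number of centrally symmetric lozenge tilings of
`CS_{x,y}(U; D; B)` (tilings invariant under the 180° rotation about the center
`(N/2, 0)` of the region, `N = x + y + 2|U ∪ D|`). -/
noncomputable def McCS (x y : ℕ) (U D B : Finset ℤ) : ℕ :=
  let N : ℤ := x + y + 2 * (U ∪ D).card
  let U' : Finset ℤ := U ∪ mir N D
  let D' : Finset ℤ := D ∪ mir N U
  Mc (N, 0)
    (HRegion (x + y + (U' ∪ D').card) (y + U'.card) (y + D'.card) ↑U' ↑D')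
    (HBar ↑(B ∪ mir N B))

/-- `Δprod S = ∏_{s < s' ∈ S} (s' - s)`. -/
def Δprod (S : Finset ℤ) : ℤ :=
  ∏ p ∈ (S ×ˢ S).filter (fun p => p.1 < p.2), (p.2 - p.1)

/-- MacMahon's box formula `PP(a,b,c)`. -/
def PP (a b c : ℕ) : ℚ :=
  ∏ i ∈ Icc 1 a, ∏ j ∈ Icc 1 b, ∏ k ∈ Icc 1 c,
    (((i : ℚ) + j + k - 1) / ((i : ℚ) + j + k - 2))

/-- The hyperfactorial `H(n) = 0!·1!⋯(n-1)!`. -/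
def hyperfac (n : ℕ) : ℕ := ∏ k ∈ range n, k.factorial

/-- The Pochhammer symbol `(q)_r = q(q+1)⋯(q+r-1)`. -/
def poch (q : ℚ) (r : ℕ) : ℚ := ∏ i ∈ range r, (q + i)

/-- The dented semihexagon `T_{a,b}(S)`: the trapezoid with north side `b`, slanted
sides `a` and base `a + b` lying above the horizontal axis (base from `(0,0)` to
`(a+b,0)`), with the up-pointing unit triangles at the positions of `S` removed
from its base. -/
def TRegion (a b : ℤ) (S : Set ℤ) : Set Tri :=
  {t | (t.2.2 = false ∧ 0 ≤ t.2.1 ∧ t.2.1 < a ∧ 0 ≤ t.1 ∧ t.1 + t.2.1 ≤ a + b - 1 ∧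
          (t.2.1 = 0 → t.1 + 1 ∉ S)) ∨
       (t.2.2 = true ∧ 0 ≤ t.2.1 ∧ t.2.1 < a ∧ 0 ≤ t.1 ∧ t.1 + t.2.1 ≤ a + b - 2)}

/-- `MT a b S` : the number of lozenge tilings of `T_{a,b}(S)`. -/
noncomputable def MT (a b : ℤ) (S : Finset ℤ) : ℕ := M (TRegion a b ↑S) ∅

/-- The trapezoid with base `L` (from `(0,0)` to `(L,0)`), height `h`. -/
def trapRegion (L h : ℤ) : Set Tri :=
  {t | (t.2.2 = false ∧ 0 ≤ t.2.1 ∧ t.2.1 < h ∧ 0 ≤ t.1 ∧ t.1 + t.2.1 ≤ L - 1) ∨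
       (t.2.2 = true ∧ 0 ≤ t.2.1 ∧ t.2.1 < h ∧ 0 ≤ t.1 ∧ t.1 + t.2.1 ≤ L - 2)}

/-- The unit triangles of the up-pointing triangle of side `s` whose base runs from
`(p,0)` to `(p+s,0)` (lying above the axis). -/
def upTriSet (p : ℤ) (s : ℕ) : Set Tri :=
  {t | t.2.2 = false ∧ 0 ≤ t.2.1 ∧ p ≤ t.1 ∧ t.1 + t.2.1 ≤ p + s - 1} ∪
  {t | t.2.2 = true ∧ 0 ≤ t.2.1 ∧ p ≤ t.1 ∧ t.1 + t.2.1 ≤ p + s - 2}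

/-- The unit triangles of the down-pointing triangle of side `s` whose top edge runs
from `(p,0)` to `(p+s,0)` (lying below the axis). -/
def downTriSet (p : ℤ) (s : ℕ) : Set Tri :=
  {t | t.2.2 = true ∧ -(s : ℤ) ≤ t.2.1 ∧ t.2.1 ≤ -1 ∧ p - t.2.1 - 1 ≤ t.1 ∧ t.1 ≤ p + s - 1} ∪
  {t | t.2.2 = false ∧ -(s : ℤ) ≤ t.2.1 ∧ t.2.1 ≤ -1 ∧ p - t.2.1 ≤ t.1 ∧ t.1 ≤ p + s - 1}

/-- A triangle of side `s` along the axis starting at `p`, up- or down-pointing. -/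
def triSet (p : ℤ) (s : ℕ) (up : Bool) : Set Tri :=
  if up then upTriSet p s else downTriSet p s

/-- The removed triangles, at the dents given by a run/gap sequence
`a₁ (run), a₂ (gap), a₃ (run), …` starting at `p`. -/
def seqRemoved : ℤ → List ℕ → Set Tri
  | _, [] => ∅
  | p, [s] => upTriSet p s
  | p, s :: g :: r => upTriSet p s ∪ seqRemoved (p + s + g) r

/-- `oSum [a₁,a₂,…] = a₁ + a₃ + a₅ + ⋯`. -/
def oSum : List ℕ → ℕ
  | [] => 0
  | [s] => s
  | s :: _ :: r => s + oSum r

/-- `sFun l = s(a₁,…,a_r)` : the number of lozenge tilings of the generalized dented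
semihexagon `S(a₁,…,a_r)` (trapezoid of base `a₁+⋯+a_r` and height `a₁+a₃+⋯`, with
up-pointing triangles of sides `a₁, a₃, …` removed from its base at mutual
distances `a₂, a₄, …`, the first one touching the west vertex). -/
noncomputable def sFun (l : List ℕ) : ℕ :=
  M (trapRegion l.sum (oSum l) \ seqRemoved 0 l) ∅

/-- A fern: a chain of lattice triangles of alternating orientations along the axis,
given by the list of side-lengths and the orientation of the first triangle. -/
structure Fern where
  lengths : List ℕ
  firstUp : Bool

/-- The total length of a fern. -/
def Fern.total (F : Fern) : ℕ := F.lengths.sum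

/-- Sum of the entries at even positions if the flag is `true` (resp. odd positions
if `false`). -/
def upLenAux : Bool → List ℕ → ℕ
  | _, [] => 0
  | true, s :: r => s + upLenAux false r
  | false, _ :: r => upLenAux true r

/-- The sum of side-lengths of the up-pointing triangles of a fern. -/
def Fern.up (F : Fern) : ℕ := upLenAux F.firstUp F.lengths

/-- The sum of side-lengths of the down-pointing triangles of a fern. -/
def Fern.down (F : Fern) : ℕ := upLenAux (!F.firstUp) F.lengths

/-- The image of a fern under 180° rotation. -/
def Fern.rot (F : Fern) : Fern :=
  ⟨F.lengths.reverse, if F.lengths.length % 2 = 1 then !F.firstUp else F.firstUp⟩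

/-- Concatenation of two ferns (the second continuing the alternation of the first). -/
def Fern.cat (F G : Fern) : Fern := ⟨F.lengths ++ G.lengths, F.firstUp⟩

/-- The unit triangles of a chain of triangles of alternating orientations starting
at `p` with the first orientation `o`. -/
def chainSet : ℤ → Bool → List ℕ → Set Tri
  | _, _, [] => ∅
  | p, o, s :: r => triSet p s o ∪ chainSet (p + s) (!o) r

/-- The unit triangles of the ferns `Fs` placed along the axis starting at `p` with
gaps `ds` between consecutive ferns. -/
def fernsSet : ℤ → List Fern → List ℕ → Set Tri
  | _, [], _ => ∅
  | p, F :: Fs, ds => chainSet p F.firstUp F.lengths ∪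
      fernsSet (p + F.total + ds.headI) Fs ds.tail

def totUp (Fs : List Fern) : ℕ := (Fs.map Fern.up).sum
def totDown (Fs : List Fern) : ℕ := (Fs.map Fern.down).sum

/-- The hexagon with ferns removed `R_{x,y}(F₁,…,F_k | d₁,…,d_{k-1})`. -/
def RRegion (x y : ℕ) (Fs : List Fern) (ds : List ℕ) : Set Tri :=
  HRegion (x + y + totUp Fs + totDown Fs) (y + totUp Fs) (y + totDown Fs) ∅ ∅ \
    fernsSet 0 Fs ds

/-- The number of lozenge tilings of `R_{x,y}(F₁,…,F_k | d₁,…,d_{k-1})`. -/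
noncomputable def MR (x y : ℕ) (Fs : List Fern) (ds : List ℕ) : ℕ :=
  M (RRegion x y Fs ds) ∅

/-- The number of centrally symmetric lozenge tilings of
`R_{x,y}(F₁,…,F_k | d₁,…,d_{k-1})` (for a centrally symmetric datum; the center of
the hexagon is the midpoint `(L/2, 0)` of its axis). -/
noncomputable def McR (x y : ℕ) (Fs : List Fern) (ds : List ℕ) : ℕ :=
  Mc ((x + y + totUp Fs + totDown Fs : ℤ), 0) (RRegion x y Fs ds) ∅

/-- The positions (labelled `1,2,…` from the left) of the removed up-pointing unit
triangles just above the axis, for a chain starting at `p` with first orientation `o`. -/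
noncomputable def upRunPos : ℤ → Bool → List ℕ → Finset ℤ
  | _, _, [] => ∅
  | p, true, s :: r => Finset.Icc (p + 1) (p + s) ∪ upRunPos (p + s) false r
  | p, false, s :: r => upRunPos (p + s) true r

/-- The positions of the removed up-pointing unit triangles along the axis for the
ferns `Fs` with gaps `ds`, starting at `p`. -/
noncomputable def upPosAll : ℤ → List Fern → List ℕ → Finset ℤ
  | _, [], _ => ∅
  | p, F :: Fs, ds => upRunPos p F.firstUp F.lengths ∪
      upPosAll (p + F.total + ds.headI) Fs ds.tail

/-- The positions of the removed down-pointing unit triangles along the axis. -/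
noncomputable def downPosAll (p : ℤ) (Fs : List Fern) (ds : List ℕ) : Finset ℤ :=
  upPosAll p (Fs.map (fun F => Fern.mk F.lengths (!F.firstUp))) ds

/-- The unit triangles removed in the generalized dented semihexagon determined by
the maximal runs of the position set `A`: a unit triangle is removed precisely when
the interval of base positions it lies over is contained in `A`. -/
def runRemoved (A : Finset ℤ) : Set Tri :=
  {t | ∀ i ∈ Finset.Icc (t.1 + 1) (t.1 + t.2.1 + (if t.2.2 then 2 else 1)), i ∈ A}

/-- `MS A` : the number of lozenge tilings of the generalized dented semihexagon
`S(e₁, e₂, …)` where `e₁, e₃, …` are the lengths of the maximal runs of `A` and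
`e₂, e₄, …` the gaps between consecutive runs (base `= max A`, height `= |A|`). -/
noncomputable def MS (A : Finset ℤ) : ℕ :=
  M (trapRegion (WithBot.unbotD 0 A.max) A.card \ runRemoved A) ∅

/-- The fern list of `E_{x,y}(F₁,…,F_k | d₁,…,d_{k-1})`:
`F₁,…,F_{k-1}, F_k ∘ F̄_k, F̄_{k-1},…,F̄₁`. -/
def EFerns (Fs : List Fern) : List Fern :=
  Fs.dropLast ++ Fern.cat (Fs.getLastD ⟨[], true⟩) (Fern.rot (Fs.getLastD ⟨[], true⟩)) ::
    (Fs.dropLast.map Fern.rot).reverse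

/-- The gap list of `E_{x,y}` : `d₁,…,d_{k-1},d_{k-1},…,d₁`. -/
def Egaps (ds : List ℕ) : List ℕ := ds ++ ds.reverse

/-- The fern list of `E'_{x,y}(F₁,…,F_k | d₁,…,d_{k-1})` : `F₁,…,F_k,F̄_k,…,F̄₁`. -/
def E'Ferns (Fs : List Fern) : List Fern := Fs ++ (Fs.map Fern.rot).reverse

/-- The gap list of `E'_{x,y}` : `d₁,…,d_{k-1},1,d_{k-1},…,d₁`. -/
def E'gaps (ds : List ℕ) : List ℕ := ds ++ 1 :: ds.reverse

end Shuf

namespace Shuf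


section AuxLemmas

lemma rot_rot (c : ℤ × ℤ) (t : Tri) : rot c (rot c t) = t := by
  obtain ⟨x, j, o⟩ := t
  simp [rot]
  omega

lemma adj_rot (c : ℤ × ℤ) {s t : Tri} (h : adj s t) : adj (rot c s) (rot c t) := by
  obtain ⟨xs, js, os⟩ := s
  obtain ⟨xt, jt, ot⟩ := t
  simp only [adj, adjUD, rot] at h ⊢
  rcases h with ⟨h1, h2, h3⟩ | ⟨h1, h2, h3⟩ <;> simp_all <;> omega

lemma even_card_of_invol (g : ℤ → ℤ) (s : Finset ℤ)
    (hs : ∀ x ∈ s, g x ∈ s ∧ g x ≠ x ∧ g (g x) = x) : Even s.card := by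
  classical
  induction s using Finset.strongInduction with
  | _ s ih =>
    rcases s.eq_empty_or_nonempty with rfl | ⟨x, hx⟩
    · simp
    · obtain ⟨hgx, hne, hgg⟩ := hs x hx
      set s' := (s.erase x).erase (g x) with hs'
      have hss : s' ⊂ s := by
        refine Finset.ssubset_iff_of_subset ?_ |>.2 ⟨x, hx, ?_⟩
        · exact (Finset.erase_subset _ _).trans (Finset.erase_subset _ _)
        · simp [hs']
      have hcard : s.card = s'.card + 2 := by
        have h1 : (s.erase x).card = s.card - 1 := Finset.card_erase_of_mem hx
        have h2 : s'.card = (s.erase x).card - 1 :=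
          Finset.card_erase_of_mem (Finset.mem_erase.2 ⟨hne, hgx⟩)
        have h3 : 1 ≤ s.card := Finset.card_pos.2 ⟨x, hx⟩
        have h4 : 1 ≤ (s.erase x).card :=
          Finset.card_pos.2 ⟨g x, Finset.mem_erase.2 ⟨hne, hgx⟩⟩
        omega
      have hev : Even s'.card := by
        refine ih s' hss ?_
        intro y hy
        have hy0 : y ∈ s := (Finset.erase_subset _ _) ((Finset.erase_subset _ _) hy)
        rw [hs', Finset.mem_erase, Finset.mem_erase] at hy
        obtain ⟨h1, h2, h3⟩ := hs y hy0
        refine ⟨?_, h2, h3⟩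
        rw [hs', Finset.mem_erase, Finset.mem_erase]
        refine ⟨?_, ?_, h1⟩
        · intro hgy
          have : y = x := by rw [← h3, hgy, hgg]
          exact hy.2.1 this
        · intro hgy
          have : g x = y := by rw [← hgy, h3]
          exact hy.1 this.symm
      obtain ⟨k, hk⟩ := hev
      exact ⟨k + 1, by omega⟩

end AuxLemmas


section MirLemmas

lemma mem_mir {N i : ℤ} {W : Finset ℤ} : i ∈ mir N W ↔ N + 1 - i ∈ W := by
  simp only [mir, Finset.mem_image]
  constructor
  · rintro ⟨w, hw, rfl⟩
    simpa using hw
  · intro h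
    exact ⟨N + 1 - i, h, by ring⟩

lemma mir_union (N : ℤ) (W₁ W₂ : Finset ℤ) :
    mir N (W₁ ∪ W₂) = mir N W₁ ∪ mir N W₂ := by
  simp [mir, Finset.image_union]

lemma card_mir (N : ℤ) (W : Finset ℤ) : (mir N W).card = W.card := by
  apply Finset.card_image_of_injective
  intro x y h
  simp only at h
  omega

end MirLemmas

set_option maxHeartbeats 4000000 in
theorem aux_half (y : ℕ) (hy : Even y) (N : ℤ) (hN1 : 1 ≤ N)
    (U' D' B' : Finset ℤ)
    (hUN : U' ⊆ Icc 1 N) (hDN : D' ⊆ Icc 1 N) (hBN : B' ⊆ Icc 1 N)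
    (hUD : mir N U' = D') (hBB : mir N B' = B')
    (hBdisj : ∀ i ∈ B', i ∉ U' ∧ i ∉ D')
    (mid : ℤ) (hmid2 : 2 * mid = N + 1)
    (hmidO : mid ∉ U' ∧ mid ∉ D' ∧ mid ∉ B')
    (aN : ℕ) (ha : aN = y + U'.card) (hcard : D'.card = U'.card)
    (hOc : (Icc 1 N \ (U' ∪ D' ∪ B')).card = y + 1) :
    Mc (N, 0) (HRegion N (aN : ℤ) (aN : ℤ) ↑U' ↑D') (HBar ↑B') =
      MT (aN : ℤ) (N - aN) (((Icc 1 N \ (U' ∪ D' ∪ B')) \ {mid}) ∪ U') := by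
  classical
  rw [Finset.sdiff_singleton_eq_erase]
  set a : ℤ := (aN : ℤ) with hadef
  set R : Set Tri := HRegion N a a ↑U' ↑D' with hRdef
  set Bar : Set (Tri × Tri) := HBar ↑B' with hBardef
  set Oc : Finset ℤ := Icc 1 N \ (U' ∪ D' ∪ B') with hOcdef
  set Ocm : Finset ℤ := Oc.erase mid with hOcmdef
  set S : Finset ℤ := Ocm ∪ U' with hSdef
  set T : Set Tri := TRegion a (N - a) ↑S with hTdef
  have hA0 : 0 ≤ a := by positivity
  -- rotation about the center
  have rotdef : ∀ x j (o : Bool), rot (N, 0) (x, j, o) = (N - x - 1, -j - 1, !o) := by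
    intro x j o
    simp only [rot]
    norm_num
  -- membership characterizations
  have memOcm : ∀ i : ℤ, i ∈ Ocm ↔
      (i ≠ mid ∧ 1 ≤ i ∧ i ≤ N ∧ i ∉ U' ∧ i ∉ D' ∧ i ∉ B') := by
    intro i
    rw [hOcmdef, Finset.mem_erase, hOcdef, Finset.mem_sdiff, Finset.mem_Icc]
    simp only [Finset.mem_union]
    tauto
  have hOcm_card : Ocm.card = y := by
    have hmidOc : mid ∈ Oc := by
      rw [hOcdef, Finset.mem_sdiff, Finset.mem_Icc]
      simp only [Finset.mem_union]
      exact ⟨by omega, by tauto⟩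
    rw [hOcmdef, Finset.card_erase_of_mem hmidOc, hOc]
    omega
  have hOcm_symm : ∀ i, i ∈ Ocm → N + 1 - i ∈ Ocm := by
    intro i hi
    rw [memOcm] at hi ⊢
    obtain ⟨h1, h2, h3, h4, h5, h6⟩ := hi
    refine ⟨by omega, by omega, by omega, ?_, ?_, ?_⟩
    · intro hc
      exact h5 (hUD ▸ mem_mir.2 hc)
    · intro hc
      rw [← hUD, mem_mir] at hc
      rw [show N + 1 - (N + 1 - i) = i by ring] at hc
      exact h4 hc
    · intro hc
      rw [← hBB, mem_mir] at hc
      rw [show N + 1 - (N + 1 - i) = i by ring] at hc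
      exact h6 hc
  have memR : ∀ x j (o : Bool), ((x, j, o) ∈ R) ↔
      ((o = false ∧ 0 ≤ j ∧ j < a ∧ 0 ≤ x ∧ x + j ≤ N - 1 ∧ (j = 0 → x + 1 ∉ U')) ∨
       (o = true ∧ 0 ≤ j ∧ j < a ∧ 0 ≤ x ∧ x + j ≤ N - 2) ∨
       (o = false ∧ -a ≤ j ∧ j ≤ -1 ∧ -j ≤ x ∧ x ≤ N - 1) ∨
       (o = true ∧ -a ≤ j ∧ j ≤ -1 ∧ -j - 1 ≤ x ∧ x ≤ N - 1 ∧ (j = -1 → x + 1 ∉ D'))) := by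
    intro x j o
    rw [hRdef]
    simp only [HRegion, Set.mem_setOf_eq, Finset.mem_coe]
  have memT : ∀ x j (o : Bool), ((x, j, o) ∈ T) ↔
      ((o = false ∧ 0 ≤ j ∧ j < a ∧ 0 ≤ x ∧ x + j ≤ N - 1 ∧ (j = 0 → x + 1 ∉ S)) ∨
       (o = true ∧ 0 ≤ j ∧ j < a ∧ 0 ≤ x ∧ x + j ≤ N - 2)) := by
    intro x j o
    rw [hTdef]
    simp only [TRegion, Set.mem_setOf_eq, Finset.mem_coe]
    constructor
    · rintro (⟨h1, h2, h3, h4, h5, h6⟩ | ⟨h1, h2, h3, h4, h5⟩)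
      · exact Or.inl ⟨h1, h2, h3, h4, by omega, h6⟩
      · exact Or.inr ⟨h1, h2, h3, h4, by omega⟩
    · rintro (⟨h1, h2, h3, h4, h5, h6⟩ | ⟨h1, h2, h3, h4, h5⟩)
      · exact Or.inl ⟨h1, h2, h3, h4, by omega, h6⟩
      · exact Or.inr ⟨h1, h2, h3, h4, by omega⟩
  have memTR : ∀ t : Tri, t ∈ T ↔
      (t ∈ R ∧ 0 ≤ t.2.1 ∧ ¬(t.2.2 = false ∧ t.2.1 = 0 ∧ t.1 + 1 ∈ Ocm)) := by
    rintro ⟨x, j, o⟩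
    dsimp only
    rw [memT x j o, memR x j o]
    have hsmem : ∀ z : ℤ, z ∈ S ↔ z ∈ Ocm ∨ z ∈ U' := fun z => by
      rw [hSdef, Finset.mem_union]
    constructor
    · rintro (⟨ho, h2, h3, h4, h5, h6⟩ | ⟨ho, h2, h3, h4, h5⟩)
      · subst ho
        refine ⟨Or.inl ⟨rfl, h2, h3, h4, h5,
          fun hj hc => (h6 hj) ((hsmem _).2 (Or.inr hc))⟩, h2, ?_⟩
        rintro ⟨-, hj, hOcm⟩
        exact h6 hj ((hsmem _).2 (Or.inl hOcm))
      · subst ho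
        exact ⟨Or.inr (Or.inl ⟨rfl, h2, h3, h4, h5⟩), h2, by rintro ⟨hc, -, -⟩; simp at hc⟩
    · rintro ⟨h1 | h1 | h1 | h1, h2, h3⟩
      · obtain ⟨ho, g2, g3, g4, g5, g6⟩ := h1
        subst ho
        refine Or.inl ⟨rfl, g2, g3, g4, g5, fun hj hc => ?_⟩
        rcases (hsmem _).1 hc with hc | hc
        · exact h3 ⟨rfl, hj, hc⟩
        · exact g6 hj hc
      · obtain ⟨ho, g2, g3, g4, g5⟩ := h1
        subst ho
        exact Or.inr ⟨rfl, g2, g3, g4, g5⟩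
      · obtain ⟨-, -, g3, -, -⟩ := h1
        exact absurd h2 (by omega)
      · obtain ⟨-, -, g3, -, -, -⟩ := h1
        exact absurd h2 (by omega)
  have hTsubR : ∀ t : Tri, t ∈ T → t ∈ R := fun t ht => ((memTR t).1 ht).1
  -- symmetry of the region and barriers
  have R_rot : ∀ t : Tri, t ∈ R → rot (N, 0) t ∈ R := by
    intro t ht
    obtain ⟨x, j, o⟩ := t
    rw [rotdef]
    rw [memR] at ht
    rw [memR]
    rcases ht with ⟨ho, h2, h3, h4, h5, h6⟩ | ⟨ho, h2, h3, h4, h5⟩ |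
      ⟨ho, h2, h3, h4, h5⟩ | ⟨ho, h2, h3, h4, h5, h6⟩ <;> subst ho
    · refine Or.inr (Or.inr (Or.inr ⟨rfl, by omega, by omega, by omega, by omega, ?_⟩))
      intro hj hc
      rw [← hUD, mem_mir] at hc
      rw [show N + 1 - (N - x - 1 + 1) = x + 1 by ring] at hc
      exact h6 (by omega) hc
    · exact Or.inr (Or.inr (Or.inl ⟨rfl, by omega, by omega, by omega, by omega⟩))
    · exact Or.inr (Or.inl ⟨rfl, by omega, by omega, by omega, by omega⟩)
    · refine Or.inl ⟨rfl, by omega, by omega, by omega, by omega, ?_⟩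
      intro hj hc
      refine h6 (by omega) ?_
      rw [← hUD, mem_mir, show N + 1 - (x + 1) = N - x - 1 + 1 by ring]
      exact hc
  have Bar_elim : ∀ p q : Tri, ((p, q) ∈ Bar) →
      ∃ i ∈ B', (p = (i - 1, 0, false) ∧ q = (i - 1, -1, true)) ∨
                (p = (i - 1, -1, true) ∧ q = (i - 1, 0, false)) := by
    intro p q hpq
    rw [hBardef] at hpq
    simp only [HBar, Set.mem_setOf_eq, Finset.mem_coe, Prod.mk.injEq] at hpq
    obtain ⟨i, hi, h⟩ := hpq
    exact ⟨i, hi, by tauto⟩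
  have Bar_intro : ∀ i ∈ B', ((i - 1, 0, false), (i - 1, -1, true)) ∈ Bar ∧
      ((i - 1, -1, true), (i - 1, 0, false)) ∈ Bar := by
    intro i hi
    rw [hBardef]
    constructor <;> exact ⟨i, hi, by tauto⟩
  -- adjacency eliminators
  have adj_up : ∀ (x j : ℤ) (s : Tri), adj (x, j, false) s →
      s = (x, j, true) ∨ s = (x - 1, j, true) ∨ s = (x, j - 1, true) := by
    rintro x j ⟨sx, sj, so⟩ (⟨h1, h2, h3⟩ | ⟨h1, h2, h3⟩)
    · have h2' : so = true := h2
      rcases h3 with ⟨e1, e2⟩ | ⟨e1, e2⟩ | ⟨e1, e2⟩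
      · have e1' : sx = x := e1
        have e2' : sj = j := e2
        exact Or.inl (by rw [Prod.mk.injEq, Prod.mk.injEq]; exact ⟨e1', e2', h2'⟩)
      · have e1' : sx = x - 1 := e1
        have e2' : sj = j := e2
        exact Or.inr (Or.inl (by rw [Prod.mk.injEq, Prod.mk.injEq]; exact ⟨e1', e2', h2'⟩))
      · have e1' : sx = x := e1
        have e2' : sj = j - 1 := e2
        exact Or.inr (Or.inr (by rw [Prod.mk.injEq, Prod.mk.injEq]; exact ⟨e1', e2', h2'⟩))
    · have h2' : (false : Bool) = true := h2
      simp at h2'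
  have adj_dn : ∀ (x j : ℤ) (s : Tri), adj (x, j, true) s →
      s = (x, j, false) ∨ s = (x + 1, j, false) ∨ s = (x, j + 1, false) := by
    rintro x j ⟨sx, sj, so⟩ (⟨h1, h2, h3⟩ | ⟨h1, h2, h3⟩)
    · have h1' : (true : Bool) = false := h1
      simp at h1'
    · have h1' : so = false := h1
      rcases h3 with ⟨e1, e2⟩ | ⟨e1, e2⟩ | ⟨e1, e2⟩
      · have e1' : x = sx := e1
        have e2' : j = sj := e2
        exact Or.inl (by rw [Prod.mk.injEq, Prod.mk.injEq]; exact ⟨by omega, by omega, h1'⟩)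
      · have e1' : x = sx - 1 := e1
        have e2' : j = sj := e2
        exact Or.inr (Or.inl (by rw [Prod.mk.injEq, Prod.mk.injEq]; exact ⟨by omega, by omega, h1'⟩))
      · have e1' : x = sx := e1
        have e2' : j = sj - 1 := e2
        exact Or.inr (Or.inr (by rw [Prod.mk.injEq, Prod.mk.injEq]; exact ⟨by omega, by omega, h1'⟩))
  -- general facts about tilings of R
  have fmemG : ∀ (f : Tri → Tri), IsTiling R Bar f → ∀ t ∈ R, f t ∈ R :=
    fun f hf t ht => (hf.2 t ht).1
  have finvG : ∀ (f : Tri → Tri), IsTiling R Bar f → ∀ t ∈ R, f (f t) = t :=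
    fun f hf t ht => (hf.2 t ht).2.2.1
  have fupG : ∀ (f : Tri → Tri), IsTiling R Bar f → ∀ t ∈ R, t.2.2 = false →
      f t = (t.1, t.2.1, true) ∨ f t = (t.1 - 1, t.2.1, true) ∨
        f t = (t.1, t.2.1 - 1, true) := by
    intro f hf t ht ho
    rcases (hf.2 t ht).2.1 with ⟨h1, h2, h3⟩ | ⟨h1, h2, h3⟩
    · rcases h3 with ⟨e1, e2⟩ | ⟨e1, e2⟩ | ⟨e1, e2⟩
      · exact Or.inl (by rw [Prod.ext_iff, Prod.ext_iff]; exact ⟨e1, e2, h2⟩)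
      · exact Or.inr (Or.inl (by rw [Prod.ext_iff, Prod.ext_iff]; exact ⟨e1, e2, h2⟩))
      · exact Or.inr (Or.inr (by rw [Prod.ext_iff, Prod.ext_iff]; exact ⟨e1, e2, h2⟩))
    · exact absurd h2 (by rw [ho]; simp)
  have fdnG : ∀ (f : Tri → Tri), IsTiling R Bar f → ∀ t ∈ R, t.2.2 = true →
      f t = (t.1, t.2.1, false) ∨ f t = (t.1 + 1, t.2.1, false) ∨
        f t = (t.1, t.2.1 + 1, false) := by
    intro f hf t ht ho
    rcases (hf.2 t ht).2.1 with ⟨h1, h2, h3⟩ | ⟨h1, h2, h3⟩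
    · exact absurd h1 (by rw [ho]; simp)
    · rcases h3 with ⟨e1, e2⟩ | ⟨e1, e2⟩ | ⟨e1, e2⟩
      · refine Or.inl ?_
        rw [Prod.ext_iff, Prod.ext_iff]
        exact ⟨show (f t).1 = t.1 by omega, show (f t).2.1 = t.2.1 by omega, h1⟩
      · refine Or.inr (Or.inl ?_)
        rw [Prod.ext_iff, Prod.ext_iff]
        exact ⟨show (f t).1 = t.1 + 1 by omega, show (f t).2.1 = t.2.1 by omega, h1⟩
      · refine Or.inr (Or.inr ?_)
        rw [Prod.ext_iff, Prod.ext_iff]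
        exact ⟨show (f t).1 = t.1 by omega, show (f t).2.1 = t.2.1 + 1 by omega, h1⟩
  -- the forced-crossings lemma
  have forced : ∀ f : Tri → Tri, IsTiling R Bar f →
      (∀ t, f (rot (N, 0) t) = rot (N, 0) (f t)) →
      ∀ i : ℤ, i ∈ Ocm ↔ ((i - 1, 0, false) ∈ R ∧ f (i - 1, 0, false) = (i - 1, -1, true)) := by
    intro f hf hsym
    have hf2 := hf.2
    have fmem : ∀ t ∈ R, f t ∈ R := fmemG f hf
    have finv : ∀ t ∈ R, f (f t) = t := finvG f hf
    have fup := fupG f hf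
    have fdn := fdnG f hf
    -- bound aN < N
    have hIccN : (Icc (1:ℤ) N).card = N.toNat := by
      rw [Int.card_Icc]
      congr 1
      omega
    have hOsub : U' ∪ D' ∪ B' ⊆ Icc 1 N := by
      intro i hi
      rcases Finset.mem_union.1 hi with hi | hi
      · rcases Finset.mem_union.1 hi with hi | hi
        · exact hUN hi
        · exact hDN hi
      · exact hBN hi
    have hNval : N.toNat = (U' ∪ D' ∪ B').card + (y + 1) := by
      have := Finset.card_sdiff_of_subset hOsub
      rw [hIccN] at this
      rw [← hOcdef] at this
      have hle := Finset.card_le_card hOsub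
      rw [hIccN] at hle
      omega
    have hUle : U'.card ≤ (U' ∪ D' ∪ B').card :=
      Finset.card_le_card (Finset.subset_union_left.trans Finset.subset_union_left)
    have haN_lt : a < N := by
      have h3 : aN < N.toNat := by omega
      rw [hadef]
      omega
    -- the Finsets of unit triangles in the upper half
    set UpFull : Finset Tri :=
      ((Icc 0 (N-1) ×ˢ Icc 0 (a-1)).filter fun p => p.1 + p.2 ≤ N - 1).image
        fun p => (p.1, p.2, false) with hUpFull
    set DnF : Finset Tri :=
      ((Icc 0 (N-1) ×ˢ Icc 0 (a-1)).filter fun p => p.1 + p.2 ≤ N - 2).image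
        fun p => (p.1, p.2, true) with hDnF
    set UpF : Finset Tri := UpFull.filter fun t => ¬(t.2.1 = 0 ∧ t.1 + 1 ∈ U') with hUpF
    have memUpFull : ∀ t : Tri, t ∈ UpFull ↔
        t.2.2 = false ∧ 0 ≤ t.1 ∧ 0 ≤ t.2.1 ∧ t.2.1 ≤ a - 1 ∧ t.1 + t.2.1 ≤ N - 1 := by
      rintro ⟨x, j, o⟩
      rw [hUpFull]
      simp only [Finset.mem_image, Finset.mem_filter, Finset.mem_product, Finset.mem_Icc]
      constructor
      · rintro ⟨⟨px, pj⟩, ⟨⟨⟨hx1, hx2⟩, hj1, hj2⟩, hsum⟩, heq⟩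
        rw [Prod.ext_iff, Prod.ext_iff] at heq
        obtain ⟨e1, e2, e3⟩ := heq
        simp only at e1 e2 e3
        refine ⟨e3.symm, by omega, by omega, by omega, by omega⟩
      · rintro ⟨ho, h1, h2, h3, h4⟩
        refine ⟨(x, j), ⟨⟨⟨h1, by omega⟩, h2, h3⟩, by omega⟩, ?_⟩
        rw [Prod.ext_iff, Prod.ext_iff]
        exact ⟨rfl, rfl, ho.symm⟩
    have memDnF : ∀ t : Tri, t ∈ DnF ↔
        t.2.2 = true ∧ 0 ≤ t.1 ∧ 0 ≤ t.2.1 ∧ t.2.1 ≤ a - 1 ∧ t.1 + t.2.1 ≤ N - 2 := by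
      rintro ⟨x, j, o⟩
      rw [hDnF]
      simp only [Finset.mem_image, Finset.mem_filter, Finset.mem_product, Finset.mem_Icc]
      constructor
      · rintro ⟨⟨px, pj⟩, ⟨⟨⟨hx1, hx2⟩, hj1, hj2⟩, hsum⟩, heq⟩
        rw [Prod.ext_iff, Prod.ext_iff] at heq
        obtain ⟨e1, e2, e3⟩ := heq
        simp only at e1 e2 e3
        refine ⟨e3.symm, by omega, by omega, by omega, by omega⟩
      · rintro ⟨ho, h1, h2, h3, h4⟩
        refine ⟨(x, j), ⟨⟨⟨h1, by omega⟩, h2, h3⟩, by omega⟩, ?_⟩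
        rw [Prod.ext_iff, Prod.ext_iff]
        exact ⟨rfl, rfl, ho.symm⟩
    have memUpR : ∀ t : Tri, t ∈ UpF ↔ (t ∈ R ∧ t.2.2 = false ∧ 0 ≤ t.2.1) := by
      rintro ⟨x, j, o⟩
      rw [hUpF, Finset.mem_filter, memUpFull, memR]
      simp only
      constructor
      · rintro ⟨⟨ho, hx0, hj0, hja, hsum⟩, hdent⟩
        exact ⟨Or.inl ⟨ho, hj0, by omega, hx0, hsum, fun hj hc => hdent ⟨hj, hc⟩⟩, ho, hj0⟩
      · rintro ⟨⟨ho, g2, g3, g4, g5, g6⟩ | ⟨ho, g2, g3, g4, g5⟩ |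
          ⟨ho, g2, g3, g4, g5⟩ | ⟨ho, g2, g3, g4, g5, g6⟩, ho', hj0⟩
        · exact ⟨⟨ho, g4, g2, by omega, g5⟩, fun hc => g6 hc.1 hc.2⟩
        · rw [ho'] at ho; simp at ho
        · omega
        · rw [ho'] at ho; simp at ho
    have memDnR : ∀ t : Tri, t ∈ DnF ↔ (t ∈ R ∧ t.2.2 = true ∧ 0 ≤ t.2.1) := by
      rintro ⟨x, j, o⟩
      rw [memDnF, memR]
      simp only
      constructor
      · rintro ⟨ho, hx0, hj0, hja, hsum⟩
        exact ⟨Or.inr (Or.inl ⟨ho, hj0, by omega, hx0, hsum⟩), ho, hj0⟩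
      · rintro ⟨⟨ho, g2, g3, g4, g5, g6⟩ | ⟨ho, g2, g3, g4, g5⟩ |
          ⟨ho, g2, g3, g4, g5⟩ | ⟨ho, g2, g3, g4, g5, g6⟩, ho', hj0⟩
        · rw [ho'] at ho; simp at ho
        · exact ⟨ho, g4, g2, by omega, g5⟩
        · rw [ho'] at ho; simp at ho
        · omega
    -- counting: cards
    set rim : Finset Tri := (Icc 0 (a-1)).image (fun j => (N-1-j, j, false)) with hrim
    set dents : Finset Tri := U'.image (fun i => (i-1, 0, false)) with hdents
    have mem_rim : ∀ t : Tri, t ∈ rim ↔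
        t.2.2 = false ∧ 0 ≤ t.2.1 ∧ t.2.1 ≤ a - 1 ∧ t.1 = N - 1 - t.2.1 := by
      rintro ⟨x, j, o⟩
      rw [hrim]
      simp only [Finset.mem_image, Finset.mem_Icc]
      constructor
      · rintro ⟨p, ⟨h1, h2⟩, heq⟩
        rw [Prod.ext_iff, Prod.ext_iff] at heq
        obtain ⟨e1, e2, e3⟩ := heq
        simp only at e1 e2 e3
        exact ⟨e3.symm, by omega, by omega, by omega⟩
      · rintro ⟨ho, h1, h2, h3⟩
        refine ⟨j, ⟨h1, h2⟩, ?_⟩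
        rw [Prod.ext_iff, Prod.ext_iff]
        exact ⟨by omega, rfl, ho.symm⟩
    have hsplit : UpFull = DnF.image (fun t : Tri => (t.1, t.2.1, false)) ∪ rim := by
      ext t
      rw [memUpFull, Finset.mem_union, mem_rim]
      constructor
      · rintro ⟨ho, h1, h2, h3, h4⟩
        by_cases hc : t.1 + t.2.1 ≤ N - 2
        · left
          rw [Finset.mem_image]
          refine ⟨(t.1, t.2.1, true), (memDnF _).2 ⟨rfl, h1, h2, h3, hc⟩, ?_⟩
          rw [Prod.ext_iff, Prod.ext_iff]
          exact ⟨rfl, rfl, ho.symm⟩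
        · right
          exact ⟨ho, h2, h3, by omega⟩
      · rintro (h | h)
        · rw [Finset.mem_image] at h
          obtain ⟨s, hs, heq⟩ := h
          rw [memDnF] at hs
          obtain ⟨ho, h1, h2, h3, h4⟩ := hs
          rw [Prod.ext_iff, Prod.ext_iff] at heq
          obtain ⟨e1, e2, e3⟩ := heq
          simp only at e1 e2 e3
          refine ⟨e3.symm, by omega, by omega, by omega, by omega⟩
        · obtain ⟨ho, h1, h2, h3⟩ := h
          refine ⟨ho, by omega, h1, h2, by omega⟩
    have hdisjsplit : Disjoint (DnF.image (fun t : Tri => (t.1, t.2.1, false))) rim := by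
      rw [Finset.disjoint_left]
      intro t ht hrimt
      rw [Finset.mem_image] at ht
      obtain ⟨s, hs, heq⟩ := ht
      rw [memDnF] at hs
      rw [mem_rim] at hrimt
      rw [Prod.ext_iff, Prod.ext_iff] at heq
      obtain ⟨e1, e2, e3⟩ := heq
      simp only at e1 e2 e3
      omega
    have hrim_card : rim.card = aN := by
      rw [hrim, Finset.card_image_of_injOn (fun p _ q _ h => by
        have := congrArg (fun t : Tri => t.2.1) h
        simpa using this)]
      rw [Int.card_Icc]
      rw [hadef]
      simp
    have himg_card : (DnF.image (fun t : Tri => (t.1, t.2.1, false))).card = DnF.card := by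
      apply Finset.card_image_of_injOn
      intro p hp q hq h
      have hp' := (memDnF p).1 hp
      have hq' := (memDnF q).1 hq
      rw [Prod.ext_iff, Prod.ext_iff] at h ⊢
      simp only at h ⊢
      refine ⟨h.1, h.2.1, ?_⟩
      rw [hp'.1, hq'.1]
    have hUpFull_card : UpFull.card = DnF.card + aN := by
      rw [hsplit, Finset.card_union_of_disjoint hdisjsplit, himg_card, hrim_card]
    have hdents_sub : dents ⊆ UpFull := by
      intro t ht
      rw [hdents, Finset.mem_image] at ht
      obtain ⟨i, hi, heq⟩ := ht
      have hbd := hUN hi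
      rw [Finset.mem_Icc] at hbd
      have hU1 : 1 ≤ U'.card := Finset.card_pos.2 ⟨i, hi⟩
      rw [memUpFull]
      have he : t.2.2 = false ∧ t.1 = i - 1 ∧ t.2.1 = 0 := by
        rw [← heq]
        exact ⟨rfl, rfl, rfl⟩
      obtain ⟨e0, e1, e2⟩ := he
      exact ⟨e0, by omega, by omega, by omega, by omega⟩
    have hdents_card : dents.card = U'.card := by
      rw [hdents]
      apply Finset.card_image_of_injOn
      intro p _ q _ h
      rw [Prod.ext_iff] at h
      simp only at h
      omega
    have hUpF_eq : UpF = UpFull \ dents := by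
      ext t
      rw [hUpF, Finset.mem_filter, Finset.mem_sdiff]
      constructor
      · rintro ⟨h1, h2⟩
        refine ⟨h1, fun hc => ?_⟩
        rw [hdents, Finset.mem_image] at hc
        obtain ⟨i, hi, heq⟩ := hc
        rw [Prod.ext_iff, Prod.ext_iff] at heq
        simp only at heq
        exact h2 ⟨heq.2.1.symm, by rw [show t.1 + 1 = i by omega]; exact hi⟩
      · rintro ⟨h1, h2⟩
        refine ⟨h1, fun hc => h2 ?_⟩
        rw [hdents, Finset.mem_image]
        refine ⟨t.1 + 1, hc.2, ?_⟩
        rw [Prod.ext_iff, Prod.ext_iff]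
        rw [memUpFull] at h1
        exact ⟨by omega, by simp [hc.1], by rw [h1.1]⟩
    have hUpF_card : UpF.card + U'.card = DnF.card + aN := by
      have h1 : UpF.card = UpFull.card - dents.card := by
        rw [hUpF_eq, Finset.card_sdiff_of_subset hdents_sub]
      have h2 : dents.card ≤ UpFull.card := Finset.card_le_card hdents_sub
      omega
    -- the crossing triangles
    set Cu : Finset Tri := UpF.filter (fun t => (f t).2.1 < 0) with hCu
    have hCuSub : Cu ⊆ UpF := Finset.filter_subset _ _
    have hbij : (UpF \ Cu).card = DnF.card := by
      apply Finset.card_bij' (i := fun t _ => f t) (j := fun t _ => f t)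
      · intro t ht
        rw [Finset.mem_sdiff] at ht
        obtain ⟨hUpt, hnc⟩ := ht
        obtain ⟨hRt, hot, hjt⟩ := (memUpR t).1 hUpt
        have hnneg : ¬((f t).2.1 < 0) := fun hc => hnc (Finset.mem_filter.2 ⟨hUpt, hc⟩)
        rw [memDnR]
        rcases fup t hRt hot with h | h | h <;> rw [h] <;>
          refine ⟨by rw [← h]; exact fmem t hRt, rfl, ?_⟩ <;> rw [h] at hnneg <;>
          simp only at hnneg ⊢ <;> omega
      · intro t ht
        obtain ⟨hRt, hot, hjt⟩ := (memDnR t).1 ht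
        have hfUp : f t ∈ UpF := by
          rw [memUpR]
          rcases fdn t hRt hot with h | h | h <;> rw [h] <;>
            exact ⟨by rw [← h]; exact fmem t hRt, rfl, by simp only; omega⟩
        rw [Finset.mem_sdiff]
        refine ⟨hfUp, fun hc => ?_⟩
        rw [hCu, Finset.mem_filter, finv t hRt] at hc
        omega
      · intro t ht
        rw [Finset.mem_sdiff] at ht
        exact finv t (((memUpR t).1 ht.1).1)
      · intro t ht
        exact finv t (((memDnR t).1 ht).1)
    have hCu_card : Cu.card = y := by
      have h1 : (UpF \ Cu).card + Cu.card = UpF.card :=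
        Finset.card_sdiff_add_card_eq_card hCuSub
      omega
    have hCuStruct : ∀ t ∈ Cu, t.2.1 = 0 ∧ t.2.2 = false ∧ t ∈ R ∧
        f t = (t.1, -1, true) := by
      intro t ht
      rw [hCu, Finset.mem_filter] at ht
      obtain ⟨hUpt, hneg⟩ := ht
      obtain ⟨hRt, hot, hjt⟩ := (memUpR t).1 hUpt
      rcases fup t hRt hot with h | h | h <;> rw [h] at hneg <;> simp only at hneg
      · omega
      · omega
      · have hj0 : t.2.1 = 0 := by omega
        rw [hj0] at h
        exact ⟨hj0, hot, hRt, by rw [h]; norm_num⟩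
    set Cp : Finset ℤ := Cu.image (fun t => t.1 + 1) with hCpdef
    have hCp_card : Cp.card = y := by
      rw [hCpdef, Finset.card_image_of_injOn, hCu_card]
      intro p hp q hq h
      have h' : p.1 + 1 = q.1 + 1 := h
      obtain ⟨p1, p2, -, -⟩ := hCuStruct p hp
      obtain ⟨q1, q2, -, -⟩ := hCuStruct q hq
      rw [Prod.ext_iff, Prod.ext_iff]
      exact ⟨show p.1 = q.1 by omega, show p.2.1 = q.2.1 by omega, by rw [p2, q2]⟩
    have hCp_mem : ∀ i ∈ Cp, (i-1, 0, false) ∈ R ∧ f (i-1,0,false) = (i-1,-1,true) := by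
      intro i hi
      rw [hCpdef, Finset.mem_image] at hi
      obtain ⟨t, ht, heq⟩ := hi
      have heq' : t.1 + 1 = i := heq
      obtain ⟨h1, h2, h3, h4⟩ := hCuStruct t ht
      have het : t = (i-1, 0, false) := by
        rw [Prod.ext_iff, Prod.ext_iff]
        exact ⟨show t.1 = i - 1 by omega, show t.2.1 = 0 from h1, h2⟩
      rw [het] at h3 h4
      exact ⟨h3, by rw [h4]⟩
    have hCp_Oc : ∀ i ∈ Cp, i ∈ Oc := by
      intro i hi
      obtain ⟨hRu, hcross⟩ := hCp_mem i hi
      have hRd : (i-1, -1, true) ∈ R := by rw [← hcross]; exact fmem _ hRu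
      have hu := (memR (i-1) 0 false).1 hRu
      have hd := (memR (i-1) (-1) true).1 hRd
      have hnotU : i ∉ U' := by
        rcases hu with ⟨-, -, -, -, -, g6⟩ | ⟨g1, -⟩ | ⟨-, -, g3, -, -⟩ | ⟨g1, -⟩
        · intro hc; exact g6 rfl (by rw [show i - 1 + 1 = i by ring]; exact hc)
        · simp at g1
        · omega
        · simp at g1
      have hbounds : 1 ≤ i ∧ i ≤ N := by
        rcases hu with ⟨-, -, -, g4, g5, -⟩ | ⟨g1, -⟩ | ⟨-, -, g3, -, -⟩ | ⟨g1, -⟩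
        · omega
        · simp at g1
        · omega
        · simp at g1
      have hnotD : i ∉ D' := by
        rcases hd with ⟨g1, -⟩ | ⟨-, g2, -, -, -⟩ | ⟨g1, -⟩ | ⟨-, -, -, -, -, g6⟩
        · simp at g1
        · exact absurd g2 (by omega)
        · simp at g1
        · intro hc; exact g6 rfl (by rw [show i - 1 + 1 = i by ring]; exact hc)
      have hnotB : i ∉ B' := by
        intro hc
        have hbar := (Bar_intro i hc).1
        have := (hf2 _ hRu).2.2.2.1
        rw [hcross] at this
        exact this hbar
      rw [hOcdef, Finset.mem_sdiff, Finset.mem_Icc]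
      simp only [Finset.mem_union]
      exact ⟨⟨hbounds.1, hbounds.2⟩, by tauto⟩
    have hCp_symm : ∀ i ∈ Cp, N + 1 - i ∈ Cp := by
      intro i hi
      obtain ⟨hRu, hcross⟩ := hCp_mem i hi
      set s : Tri := (N - i, -1, true) with hs
      have hrots : rot (N, 0) (i-1, 0, false) = s := by
        rw [rotdef, hs]
        rw [Prod.mk.injEq, Prod.mk.injEq]
        refine ⟨by omega, by omega, rfl⟩
      have hsR : s ∈ R := by rw [← hrots]; exact R_rot _ hRu
      have hfs : f s = (N - i, 0, false) := by
        rw [← hrots, hsym, hcross, rotdef]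
        rw [Prod.mk.injEq, Prod.mk.injEq]
        refine ⟨by omega, by omega, rfl⟩
      have hfsR : f s ∈ R := fmem s hsR
      have hfsUp : f s ∈ UpF := by
        rw [memUpR, hfs]
        exact ⟨by rw [← hfs]; exact hfsR, rfl, by simp⟩
      have hfsCu : f s ∈ Cu := by
        rw [hCu, Finset.mem_filter, finv s hsR, hs]
        exact ⟨hfsUp, by simp⟩
      rw [hCpdef, Finset.mem_image]
      exact ⟨f s, hfsCu, by rw [hfs]; simp only; omega⟩
    have hmid_not : mid ∉ Cp := by
      intro hmem
      have hev := even_card_of_invol (fun x => N + 1 - x) (Cp.erase mid) (by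
        intro x hx
        rw [Finset.mem_erase] at hx
        obtain ⟨hne, hxCp⟩ := hx
        refine ⟨?_, by omega, by ring⟩
        rw [Finset.mem_erase]
        exact ⟨by omega, hCp_symm x hxCp⟩)
      have hcarde : (Cp.erase mid).card = Cp.card - 1 := Finset.card_erase_of_mem hmem
      obtain ⟨k, hk⟩ := hev
      obtain ⟨l, hl⟩ := hy
      have hpos : 1 ≤ Cp.card := Finset.card_pos.2 ⟨mid, hmem⟩
      omega
    have hCpOcm : Cp ⊆ Ocm := by
      intro i hi
      rw [hOcmdef, Finset.mem_erase]
      exact ⟨fun hc => hmid_not (hc ▸ hi), hCp_Oc i hi⟩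
    have hforced : Cp = Ocm :=
      Finset.eq_of_subset_of_card_le hCpOcm (by rw [hOcm_card, hCp_card])
    intro i
    constructor
    · intro hi
      rw [← hforced] at hi
      exact hCp_mem i hi
    · rintro ⟨hR', hcross⟩
      have hUp : (i-1, 0, false) ∈ UpF := (memUpR _).2 ⟨hR', rfl, le_refl 0⟩
      have hCuMem : (i-1, 0, false) ∈ Cu := by
        rw [hCu, Finset.mem_filter, hcross]
        exact ⟨hUp, by simp⟩
      rw [← hforced, hCpdef, Finset.mem_image]
      exact ⟨_, hCuMem, by simp only; omega⟩
  -- the bijection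
  have main : {f : Tri → Tri // IsTiling R Bar f ∧ ∀ t, f (rot (N, 0) t) = rot (N, 0) (f t)} ≃
      {g : Tri → Tri // IsTiling T ∅ g} := by
    have hrot' : ∀ t : Tri, rot (N, 0) t = (N - t.1 - 1, -t.2.1 - 1, !t.2.2) := by
      rintro ⟨x, j, o⟩
      exact rotdef x j o
    have hrr : ∀ t : Tri, rot (N, 0) (rot (N, 0) t) = t := fun t => rot_rot _ t
    have R_rot_iff : ∀ t : Tri, rot (N, 0) t ∈ R ↔ t ∈ R := by
      intro t
      refine ⟨fun h => ?_, R_rot t⟩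
      have h2 := R_rot _ h
      rwa [hrr] at h2
    have hOcmB : ∀ i ∈ Ocm, i ∉ B' := fun i hi => ((memOcm i).1 hi).2.2.2.2.2
    have hOcmR2 : ∀ x : ℤ, x + 1 ∈ Ocm → (x, 0, false) ∈ R ∧ (x, -1, true) ∈ R := by
      intro x hx
      have hy1 : 1 ≤ aN := by
        have h0 : 0 < Ocm.card := Finset.card_pos.2 ⟨x + 1, hx⟩
        omega
      have hm := (memOcm _).1 hx
      constructor
      · rw [memR]
        exact Or.inl ⟨rfl, le_refl 0, by omega, by omega, by omega, fun _ => hm.2.2.2.1⟩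
      · rw [memR]
        exact Or.inr (Or.inr (Or.inr
          ⟨rfl, by omega, by omega, by omega, by omega, fun _ => hm.2.2.2.2.1⟩))
    have hBarFacts : ∀ p q : Tri, (p, q) ∈ Bar →
        ((p.2.1 = 0 ∧ q.2.1 = -1) ∨ (p.2.1 = -1 ∧ q.2.1 = 0)) ∧ p.1 + 1 ∈ B' := by
      intro p q h
      obtain ⟨i, hiB, hc | hc⟩ := Bar_elim p q h
      · obtain ⟨hp, hq⟩ := hc
        have hp1 : p.1 = i - 1 := by rw [hp]
        have hp2 : p.2.1 = 0 := by rw [hp]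
        have hq2 : q.2.1 = -1 := by rw [hq]
        exact ⟨Or.inl ⟨hp2, hq2⟩, by rw [show p.1 + 1 = i by omega]; exact hiB⟩
      · obtain ⟨hp, hq⟩ := hc
        have hp1 : p.1 = i - 1 := by rw [hp]
        have hp2 : p.2.1 = -1 := by rw [hp]
        have hq2 : q.2.1 = 0 := by rw [hq]
        exact ⟨Or.inr ⟨hp2, hq2⟩, by rw [show p.1 + 1 = i by omega]; exact hiB⟩
    have hTrow : ∀ t ∈ T, (0:ℤ) ≤ t.2.1 := fun t ht => ((memTR t).1 ht).2.1
    have hTnl : ∀ t : Tri, t.2.1 ≤ -1 → t ∉ T := fun t h ht => by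
      have := hTrow t ht
      omega
    have hTdent : ∀ t : Tri, t.2.2 = false → t.2.1 = 0 → t.1 + 1 ∈ Ocm → t ∉ T :=
      fun t h1 h2 h3 ht => ((memTR t).1 ht).2.2 ⟨h1, h2, h3⟩
    have hTin : ∀ t ∈ R, (0:ℤ) ≤ t.2.1 →
        ¬(t.2.2 = false ∧ t.2.1 = 0 ∧ t.1 + 1 ∈ Ocm) → t ∈ T :=
      fun t h1 h2 h3 => (memTR t).2 ⟨h1, h2, h3⟩
    have hcasesR : ∀ t ∈ R, t ∉ T →
        ((t.2.2 = false ∧ t.2.1 = 0 ∧ t.1 + 1 ∈ Ocm) ∨ t.2.1 ≤ -1) := by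
      intro t htR htT
      by_cases hrow : (0:ℤ) ≤ t.2.1
      · left
        by_contra hc
        exact htT (hTin t htR hrow hc)
      · right
        omega
    have hrotT : ∀ t ∈ R, t.2.1 ≤ -1 → ¬(t.2.2 = true ∧ t.2.1 = -1 ∧ t.1 + 1 ∈ Ocm) →
        rot (N, 0) t ∈ T := by
      intro t htR hrow hnP3
      refine hTin _ (R_rot t htR) ?_ ?_
      · rw [hrot']
        show (0:ℤ) ≤ -t.2.1 - 1
        omega
      · rw [hrot']
        rintro ⟨e1, e2, e3⟩
        have e1' : (!t.2.2) = false := e1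
        have e2' : -t.2.1 - 1 = 0 := e2
        have e3' : (N - t.1 - 1) + 1 ∈ Ocm := e3
        apply hnP3
        refine ⟨?_, by omega, ?_⟩
        · cases hss : t.2.2 with
          | false => rw [hss] at e1'; simp at e1'
          | true => rfl
        · have h4 := hOcm_symm _ e3'
          rwa [show N + 1 - (N - t.1 - 1 + 1) = t.1 + 1 by ring] at h4
    -- the lifting map for the inverse direction
    set gg : (Tri → Tri) → Tri → Tri := fun g t =>
      if t ∈ T then g t
      else if t.2.2 = false ∧ t.2.1 = 0 ∧ t.1 + 1 ∈ Ocm ∧ t ∈ R then (t.1, -1, true)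
      else if t.2.2 = true ∧ t.2.1 = -1 ∧ t.1 + 1 ∈ Ocm ∧ t ∈ R then (t.1, 0, false)
      else if t ∈ R then rot (N, 0) (g (rot (N, 0) t))
      else t with hggdef
    have ggT : ∀ (g : Tri → Tri) (t : Tri), t ∈ T → gg g t = g t := by
      intro g t ht
      simp only [hggdef]
      rw [if_pos ht]
    have ggF : ∀ (g : Tri → Tri) (t : Tri), t ∉ T → t.2.2 = false → t.2.1 = 0 →
        t.1 + 1 ∈ Ocm → t ∈ R → gg g t = (t.1, -1, true) := by
      intro g t h1 h2 h3 h4 h5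
      simp only [hggdef]
      rw [if_neg h1, if_pos ⟨h2, h3, h4, h5⟩]
    have ggD : ∀ (g : Tri → Tri) (t : Tri), t.2.2 = true → t.2.1 = -1 →
        t.1 + 1 ∈ Ocm → t ∈ R → gg g t = (t.1, 0, false) := by
      intro g t h2 h3 h4 h5
      simp only [hggdef]
      rw [if_neg (hTnl t (by omega)), if_neg (fun hc => absurd h2 (by rw [hc.1]; simp)),
        if_pos ⟨h2, h3, h4, h5⟩]
    have ggLow : ∀ (g : Tri → Tri) (t : Tri), t ∈ R → t.2.1 ≤ -1 →
        ¬(t.2.2 = true ∧ t.2.1 = -1 ∧ t.1 + 1 ∈ Ocm) →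
        gg g t = rot (N, 0) (g (rot (N, 0) t)) := by
      intro g t h1 h2 h3
      simp only [hggdef]
      rw [if_neg (hTnl t h2), if_neg (fun hc => absurd hc.2.1 (by omega)),
        if_neg (fun hc => h3 ⟨hc.1, hc.2.1, hc.2.2.1⟩), if_pos h1]
    have ggOut : ∀ (g : Tri → Tri) (t : Tri), t ∉ R → gg g t = t := by
      intro g t h
      simp only [hggdef]
      rw [if_neg (fun hc => h (hTsubR _ hc)), if_neg (fun hc => h hc.2.2.2),
        if_neg (fun hc => h hc.2.2.2), if_neg h]
    -- forward direction is a tiling of T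
    have Fprop : ∀ f : Tri → Tri, IsTiling R Bar f →
        (∀ t, f (rot (N, 0) t) = rot (N, 0) (f t)) →
        IsTiling T ∅ (fun t => if t ∈ T then f t else t) := by
      intro f hf hsymf
      have hforced := forced f hf hsymf
      constructor
      · intro t ht
        show (if t ∈ T then f t else t) = t
        rw [if_neg ht]
      · intro t ht
        have htR := hTsubR t ht
        have hfmem := fmemG f hf t htR
        have hfadj := (hf.2 t htR).2.1
        have hfinv := finvG f hf t htR
        obtain ⟨-, hrow, hnd⟩ := (memTR t).1 ht
        have hnotdent : ¬((f t).2.2 = false ∧ (f t).2.1 = 0 ∧ (f t).1 + 1 ∈ Ocm) := by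
          rintro ⟨hup, hrow0, hOc2⟩
          obtain ⟨hmemX, hcrX⟩ := (hforced ((f t).1 + 1)).1 hOc2
          rw [show (f t).1 + 1 - 1 = (f t).1 by ring] at hcrX
          have hft_eq : f t = ((f t).1, 0, false) := by
            rw [Prod.ext_iff, Prod.ext_iff]
            exact ⟨rfl, hrow0, hup⟩
          rw [← hft_eq] at hcrX
          rw [hfinv] at hcrX
          have hcontra : t.2.1 = -1 := by rw [hcrX]
          omega
        have hftT : f t ∈ T := by
          cases hot : t.2.2 with
          | false =>
            rcases fupG f hf t htR hot with hc | hc | hc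
            · exact hTin _ hfmem (by rw [hc]; exact hrow) hnotdent
            · exact hTin _ hfmem (by rw [hc]; exact hrow) hnotdent
            · have hj1 : 1 ≤ t.2.1 := by
                by_contra hj
                have hj0 : t.2.1 = 0 := by omega
                have ht_eq : t = (t.1, 0, false) := by
                  rw [Prod.ext_iff, Prod.ext_iff]
                  exact ⟨rfl, hj0, hot⟩
                have hOcmem : t.1 + 1 ∈ Ocm := by
                  rw [hforced (t.1 + 1)]
                  constructor
                  · rw [show t.1 + 1 - 1 = t.1 by ring, ← ht_eq]
                    exact htR
                  · rw [show t.1 + 1 - 1 = t.1 by ring, ← ht_eq, hc]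
                    rw [Prod.mk.injEq, Prod.mk.injEq]
                    exact ⟨rfl, by omega, rfl⟩
                exact hnd ⟨hot, hj0, hOcmem⟩
              exact hTin _ hfmem (by rw [hc]; show (0:ℤ) ≤ t.2.1 - 1; omega) hnotdent
          | true =>
            rcases fdnG f hf t htR hot with hc | hc | hc
            · exact hTin _ hfmem (by rw [hc]; exact hrow) hnotdent
            · exact hTin _ hfmem (by rw [hc]; exact hrow) hnotdent
            · exact hTin _ hfmem (by rw [hc]; show (0:ℤ) ≤ t.2.1 + 1; omega) hnotdent
        show (if t ∈ T then f t else t) ∈ T ∧ adj t (if t ∈ T then f t else t) ∧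
            (fun t => if t ∈ T then f t else t) (if t ∈ T then f t else t) = t ∧
            (t, if t ∈ T then f t else t) ∉ (∅ : Set (Tri × Tri)) ∧
            ((if t ∈ T then f t else t), t) ∉ (∅ : Set (Tri × Tri))
        rw [if_pos ht]
        show f t ∈ T ∧ adj t (f t) ∧ (if f t ∈ T then f (f t) else f t) = t ∧
            (t, f t) ∉ (∅ : Set (Tri × Tri)) ∧ (f t, t) ∉ (∅ : Set (Tri × Tri))
        rw [if_pos hftT]
        exact ⟨hftT, hfadj, hfinv, Set.notMem_empty _, Set.notMem_empty _⟩
    -- backward direction is a symmetric tiling of R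
    have Gprop : ∀ g : Tri → Tri, IsTiling T ∅ g →
        IsTiling R Bar (gg g) ∧ ∀ t, gg g (rot (N, 0) t) = rot (N, 0) (gg g t) := by
      intro g hg
      have gmem : ∀ t ∈ T, g t ∈ T := fun t ht => (hg.2 t ht).1
      have ginv : ∀ t ∈ T, g (g t) = t := fun t ht => (hg.2 t ht).2.2.1
      have gadj : ∀ t ∈ T, adj t (g t) := fun t ht => (hg.2 t ht).2.1
      refine ⟨⟨fun t ht => ggOut g t ht, ?_⟩, ?_⟩
      · intro t htR
        by_cases htT : t ∈ T
        · rw [ggT g t htT]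
          have h1 : g t ∈ T := gmem t htT
          refine ⟨hTsubR _ h1, gadj t htT, ?_, ?_, ?_⟩
          · rw [ggT g (g t) h1]
            exact ginv t htT
          · intro hc
            obtain ⟨hrows, -⟩ := hBarFacts _ _ hc
            have r1 := hTrow t htT
            have r2 := hTrow _ h1
            rcases hrows with ⟨-, h⟩ | ⟨h, -⟩ <;> omega
          · intro hc
            obtain ⟨hrows, -⟩ := hBarFacts _ _ hc
            have r1 := hTrow t htT
            have r2 := hTrow _ h1
            rcases hrows with ⟨-, h⟩ | ⟨h, -⟩ <;> omega
        · rcases hcasesR t htR htT with ⟨ho, hj, hOc⟩ | hlow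
          · -- crossing up triangle
            rw [ggF g t htT ho hj hOc htR]
            have ht_eq : t = (t.1, 0, false) := by
              rw [Prod.ext_iff, Prod.ext_iff]
              exact ⟨rfl, hj, ho⟩
            refine ⟨(hOcmR2 t.1 hOc).2, ?_, ?_, ?_, ?_⟩
            · left
              exact ⟨ho, rfl, Or.inr (Or.inr ⟨rfl, show (-1:ℤ) = t.2.1 - 1 by omega⟩)⟩
            · rw [ggD g (t.1, -1, true) rfl rfl hOc (hOcmR2 t.1 hOc).2]
              exact ht_eq.symm
            · intro hc
              exact hOcmB _ hOc (hBarFacts _ _ hc).2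
            · intro hc
              have h2 := (hBarFacts _ _ hc).2
              exact hOcmB _ hOc h2
          · by_cases hP3 : t.2.2 = true ∧ t.2.1 = -1 ∧ t.1 + 1 ∈ Ocm
            · obtain ⟨ho, hj, hOc⟩ := hP3
              rw [ggD g t ho hj hOc htR]
              have ht_eq : t = (t.1, -1, true) := by
                rw [Prod.ext_iff, Prod.ext_iff]
                exact ⟨rfl, hj, ho⟩
              refine ⟨(hOcmR2 t.1 hOc).1, ?_, ?_, ?_, ?_⟩
              · right
                exact ⟨rfl, ho, Or.inr (Or.inr ⟨rfl, show t.2.1 = (0:ℤ) - 1 by omega⟩)⟩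
              · rw [ggF g (t.1, 0, false)
                  (hTdent _ rfl rfl hOc) rfl rfl hOc (hOcmR2 t.1 hOc).1]
                exact ht_eq.symm
              · intro hc
                exact hOcmB _ hOc (hBarFacts _ _ hc).2
              · intro hc
                exact hOcmB _ hOc (hBarFacts _ _ hc).2
            · rw [ggLow g t htR hlow hP3]
              have hrtT : rot (N, 0) t ∈ T := hrotT t htR hlow hP3
              have hgrt : g (rot (N, 0) t) ∈ T := gmem _ hrtT
              have hgrtR : g (rot (N, 0) t) ∈ R := hTsubR _ hgrt
              have hsrow : (0:ℤ) ≤ (g (rot (N, 0) t)).2.1 := hTrow _ hgrt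
              have hv_low : (rot (N, 0) (g (rot (N, 0) t))).2.1 ≤ -1 := by
                rw [hrot']
                show -(g (rot (N, 0) t)).2.1 - 1 ≤ -1
                omega
              refine ⟨R_rot _ hgrtR, ?_, ?_, ?_, ?_⟩
              · have hadj2 := adj_rot (N, 0) (gadj _ hrtT)
                rwa [hrr] at hadj2
              · have hvR : rot (N, 0) (g (rot (N, 0) t)) ∈ R := R_rot _ hgrtR
                have hvP3 : ¬((rot (N, 0) (g (rot (N, 0) t))).2.2 = true ∧
                    (rot (N, 0) (g (rot (N, 0) t))).2.1 = -1 ∧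
                    (rot (N, 0) (g (rot (N, 0) t))).1 + 1 ∈ Ocm) := by
                  rw [hrot']
                  rintro ⟨e1, e2, e3⟩
                  have e1' : (!(g (rot (N, 0) t)).2.2) = true := e1
                  have e2' : -(g (rot (N, 0) t)).2.1 - 1 = -1 := e2
                  have e3' : N - (g (rot (N, 0) t)).1 - 1 + 1 ∈ Ocm := e3
                  have hs2 : (g (rot (N, 0) t)).2.2 = false := by
                    cases hss : (g (rot (N, 0) t)).2.2 with
                    | false => rfl
                    | true => rw [hss] at e1'; simp at e1'
                  have hpos : (g (rot (N, 0) t)).1 + 1 ∈ Ocm := by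
                    have h4 := hOcm_symm _ e3'
                    rwa [show N + 1 - (N - (g (rot (N, 0) t)).1 - 1 + 1) =
                      (g (rot (N, 0) t)).1 + 1 by ring] at h4
                  exact ((memTR _).1 hgrt).2.2 ⟨hs2, by omega, hpos⟩
                rw [ggLow g _ hvR hv_low hvP3, hrr]
                rw [show g (g (rot (N, 0) t)) = rot (N, 0) t from ginv _ hrtT, hrr]
              · intro hc
                obtain ⟨hrows, -⟩ := hBarFacts _ _ hc
                rcases hrows with ⟨h, -⟩ | ⟨-, h⟩ <;> omega
              · intro hc
                obtain ⟨hrows, -⟩ := hBarFacts _ _ hc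
                rcases hrows with ⟨h, -⟩ | ⟨-, h⟩ <;> omega
      · intro t
        by_cases htR : t ∈ R
        · by_cases htT : t ∈ T
          · rw [ggT g t htT]
            have hrow := hTrow t htT
            have hrt_low : (rot (N, 0) t).2.1 ≤ -1 := by
              rw [hrot']
              show -t.2.1 - 1 ≤ -1
              omega
            have hrtR : rot (N, 0) t ∈ R := R_rot t htR
            have hrtP3 : ¬((rot (N, 0) t).2.2 = true ∧ (rot (N, 0) t).2.1 = -1 ∧
                (rot (N, 0) t).1 + 1 ∈ Ocm) := by
              rw [hrot']
              rintro ⟨e1, e2, e3⟩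
              have e1' : (!t.2.2) = true := e1
              have e2' : -t.2.1 - 1 = -1 := e2
              have e3' : N - t.1 - 1 + 1 ∈ Ocm := e3
              have h2 : t.2.2 = false := by
                cases hss : t.2.2 with
                | false => rfl
                | true => rw [hss] at e1'; simp at e1'
              have hpos : t.1 + 1 ∈ Ocm := by
                have h4 := hOcm_symm _ e3'
                rwa [show N + 1 - (N - t.1 - 1 + 1) = t.1 + 1 by ring] at h4
              exact ((memTR t).1 htT).2.2 ⟨h2, by omega, hpos⟩
            rw [ggLow g (rot (N, 0) t) hrtR hrt_low hrtP3, hrr]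
          · rcases hcasesR t htR htT with ⟨ho, hj, hOc⟩ | hlow
            · rw [ggF g t htT ho hj hOc htR]
              have hposr : (rot (N, 0) t).1 + 1 ∈ Ocm := by
                rw [hrot']
                show N - t.1 - 1 + 1 ∈ Ocm
                have h4 := hOcm_symm _ hOc
                rwa [show N + 1 - (t.1 + 1) = N - t.1 - 1 + 1 by ring] at h4
              have hor : (rot (N, 0) t).2.2 = true := by
                rw [hrot']
                show (!t.2.2) = true
                rw [ho]
                rfl
              have hjr : (rot (N, 0) t).2.1 = -1 := by
                rw [hrot']
                show -t.2.1 - 1 = -1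
                omega
              rw [ggD g (rot (N, 0) t) hor hjr hposr (R_rot t htR)]
              rw [hrot' t, rotdef, Prod.mk.injEq, Prod.mk.injEq]
              exact ⟨rfl, by omega, rfl⟩
            · by_cases hP3 : t.2.2 = true ∧ t.2.1 = -1 ∧ t.1 + 1 ∈ Ocm
              · obtain ⟨ho, hj, hOc⟩ := hP3
                rw [ggD g t ho hj hOc htR]
                have hposr : (rot (N, 0) t).1 + 1 ∈ Ocm := by
                  rw [hrot']
                  show N - t.1 - 1 + 1 ∈ Ocm
                  have h4 := hOcm_symm _ hOc
                  rwa [show N + 1 - (t.1 + 1) = N - t.1 - 1 + 1 by ring] at h4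
                have hor : (rot (N, 0) t).2.2 = false := by
                  rw [hrot']
                  show (!t.2.2) = false
                  rw [ho]
                  rfl
                have hjr : (rot (N, 0) t).2.1 = 0 := by
                  rw [hrot']
                  show -t.2.1 - 1 = 0
                  omega
                have hnotT : rot (N, 0) t ∉ T := hTdent _ hor hjr hposr
                rw [ggF g (rot (N, 0) t) hnotT hor hjr hposr (R_rot t htR)]
                rw [hrot' t, rotdef, Prod.mk.injEq, Prod.mk.injEq]
                exact ⟨rfl, by omega, rfl⟩
              · rw [ggLow g t htR hlow hP3]
                have hrtT : rot (N, 0) t ∈ T := hrotT t htR hlow hP3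
                rw [ggT g (rot (N, 0) t) hrtT, hrr]
        · have hrtR : rot (N, 0) t ∉ R := fun hc => htR ((R_rot_iff t).1 hc)
          rw [ggOut g t htR, ggOut g (rot (N, 0) t) hrtR]
    -- assemble the equivalence
    refine ⟨fun fp => ⟨fun t => if t ∈ T then fp.1 t else t, Fprop fp.1 fp.2.1 fp.2.2⟩,
            fun gp => ⟨gg gp.1, (Gprop gp.1 gp.2).1, (Gprop gp.1 gp.2).2⟩, ?_, ?_⟩
    · rintro ⟨f, hf, hsymf⟩
      apply Subtype.ext
      funext t
      show gg (fun t' => if t' ∈ T then f t' else t') t = f t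
      set f' : Tri → Tri := fun t' => if t' ∈ T then f t' else t' with hf'def
      have hforced := forced f hf hsymf
      by_cases htR : t ∈ R
      · by_cases htT : t ∈ T
        · rw [ggT f' t htT]
          show (if t ∈ T then f t else t) = f t
          rw [if_pos htT]
        · rcases hcasesR t htR htT with ⟨ho, hj, hOc⟩ | hlow
          · rw [ggF f' t htT ho hj hOc htR]
            obtain ⟨-, hcr⟩ := (hforced (t.1 + 1)).1 hOc
            rw [show t.1 + 1 - 1 = t.1 by ring] at hcr
            have ht_eq : t = (t.1, 0, false) := by
              rw [Prod.ext_iff, Prod.ext_iff]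
              exact ⟨rfl, hj, ho⟩
            rw [← ht_eq] at hcr
            exact hcr.symm
          · by_cases hP3 : t.2.2 = true ∧ t.2.1 = -1 ∧ t.1 + 1 ∈ Ocm
            · obtain ⟨ho, hj, hOc⟩ := hP3
              rw [ggD f' t ho hj hOc htR]
              obtain ⟨hmemu, hcr⟩ := (hforced (t.1 + 1)).1 hOc
              rw [show t.1 + 1 - 1 = t.1 by ring] at hmemu hcr
              have ht_eq : t = (t.1, -1, true) := by
                rw [Prod.ext_iff, Prod.ext_iff]
                exact ⟨rfl, hj, ho⟩
              have h5 : f (t.1, -1, true) = (t.1, 0, false) := by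
                rw [← hcr, finvG f hf _ hmemu]
              exact ((congrArg f ht_eq).trans h5).symm
            · rw [ggLow f' t htR hlow hP3]
              have hrtT : rot (N, 0) t ∈ T := hrotT t htR hlow hP3
              have hfeval : f' (rot (N, 0) t) = f (rot (N, 0) t) := by
                simp only [hf'def]
                rw [if_pos hrtT]
              rw [hfeval, hsymf, hrr]
      · rw [ggOut f' t htR, hf.1 t htR]
    · rintro ⟨g, hg⟩
      apply Subtype.ext
      funext t
      show (if t ∈ T then gg g t else t) = g t
      by_cases htT : t ∈ T
      · rw [if_pos htT, ggT g t htT]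
      · rw [if_neg htT, hg.1 t htT]
  show Mc (N, 0) (HRegion N a a ↑U' ↑D') (HBar ↑B') = MT a (N - a) S
  rw [Mc, MT, M]
  rw [← hRdef, ← hBardef, ← hTdef]
  exact Nat.card_congr main

set_option maxHeartbeats 1000000 in
/-- base case `x = 2b + 1`. -/
theorem stmt16 (y b : ℕ) (hy : Even y) (U D B : Finset ℤ) (hb : B.card = b)
    (n : ℕ) (hn : n = (U ∪ D).card) (N : ℕ) (hN : N = 2 * b + 1 + y + 2 * n)
    (m : ℕ) (hm : m = 2 * n - U.card - D.card)
    (hU : U ⊆ Icc 1 ((N / 2 : ℕ) : ℤ)) (hD : D ⊆ Icc 1 ((N / 2 : ℕ) : ℤ))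
    (hB : B ⊆ Icc 1 ((N / 2 : ℕ) : ℤ))
    (hBd : B ∩ (U ∪ D) = ∅)
    (hmid : (((N + 1) / 2 : ℕ) : ℤ) ∉ U ∪ D ∪ B)
    (O : Finset ℤ) (hO : O = (U ∪ D ∪ B) ∪ mir (N : ℤ) (U ∪ D ∪ B)) :
    McCS (2 * b + 1) y U D B =
      MT ((y + U.card + D.card : ℕ) : ℤ) ((2 * b + 1 + m : ℕ) : ℤ)
        (((Icc (1 : ℤ) (N : ℤ) \ O) \ {(((N + 1) / 2 : ℕ) : ℤ)}) ∪ U ∪ mir (N : ℤ) D) := by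
  classical
  set Nz : ℤ := (N : ℤ) with hNz
  -- basic numeric facts
  obtain ⟨y2, hy2⟩ := hy
  have hodd : N % 2 = 1 := by omega
  set mid : ℤ := (((N + 1) / 2 : ℕ) : ℤ) with hmiddef
  have hmid2 : 2 * mid = Nz + 1 := by
    have : 2 * ((N + 1) / 2) = N + 1 := by omega
    rw [hmiddef, hNz]
    exact_mod_cast this
  have hN1 : (1 : ℤ) ≤ Nz := by rw [hNz]; exact_mod_cast Nat.one_le_iff_ne_zero.2 (by omega)
  -- halves
  have hhalfN : ((N / 2 : ℕ) : ℤ) = (Nz - 1) / 2 := by rw [hNz]; omega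
  have hhalf : ∀ w : ℤ, w ∈ U ∪ D ∪ B → 1 ≤ w ∧ 2 * w < Nz := by
    intro w hw
    have : w ∈ Icc 1 ((N / 2 : ℕ) : ℤ) := by
      rcases Finset.mem_union.1 hw with hw | hw
      · rcases Finset.mem_union.1 hw with hw | hw
        · exact hU hw
        · exact hD hw
      · exact hB hw
    rw [Finset.mem_Icc] at this
    omega
  have hBd' : ∀ w, w ∈ B → w ∉ U ∧ w ∉ D := by
    intro w hw
    have h : w ∉ U ∪ D := by
      intro hc
      have : w ∈ B ∩ (U ∪ D) := Finset.mem_inter.2 ⟨hw, hc⟩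
      rw [hBd] at this
      simp at this
    simp only [Finset.mem_union] at h
    tauto
  set U' : Finset ℤ := U ∪ mir Nz D with hU'
  set D' : Finset ℤ := D ∪ mir Nz U with hD'
  set B' : Finset ℤ := B ∪ mir Nz B with hB'
  have memU' : ∀ i, i ∈ U' ↔ i ∈ U ∨ Nz + 1 - i ∈ D := by
    intro i; simp [hU', mem_mir]
  have memD' : ∀ i, i ∈ D' ↔ i ∈ D ∨ Nz + 1 - i ∈ U := by
    intro i; simp [hD', mem_mir]
  have memB' : ∀ i, i ∈ B' ↔ i ∈ B ∨ Nz + 1 - i ∈ B := by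
    intro i; simp [hB', mem_mir]
  -- subsets
  have hUN : U' ⊆ Icc 1 Nz := by
    intro i hi
    rw [memU'] at hi
    rw [Finset.mem_Icc]
    rcases hi with hi | hi
    · have := hhalf i (by simp [hi]); omega
    · have := hhalf _ (by simp [hi] : Nz + 1 - i ∈ U ∪ D ∪ B); omega
  have hDN : D' ⊆ Icc 1 Nz := by
    intro i hi
    rw [memD'] at hi
    rw [Finset.mem_Icc]
    rcases hi with hi | hi
    · have := hhalf i (by simp [hi]); omega
    · have := hhalf _ (by simp [hi] : Nz + 1 - i ∈ U ∪ D ∪ B); omega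
  have hBN : B' ⊆ Icc 1 Nz := by
    intro i hi
    rw [memB'] at hi
    rw [Finset.mem_Icc]
    rcases hi with hi | hi
    · have := hhalf i (by simp [hi]); omega
    · have := hhalf _ (by simp [hi] : Nz + 1 - i ∈ U ∪ D ∪ B); omega
  -- symmetry
  have hinv : ∀ i : ℤ, Nz + 1 - (Nz + 1 - i) = i := fun i => by ring
  have hUDm : mir Nz U' = D' := by
    ext i
    rw [mem_mir, memU' (Nz + 1 - i), memD' i, hinv i]
    tauto
  have hBBm : mir Nz B' = B' := by
    ext i
    rw [mem_mir, memB' (Nz + 1 - i), memB' i, hinv i]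
    tauto
  -- disjointness
  have hBdisj : ∀ i ∈ B', i ∉ U' ∧ i ∉ D' := by
    intro i hi
    rw [memB'] at hi
    refine ⟨?_, ?_⟩
    · rw [memU']
      rintro (h | h)
      · rcases hi with hi | hi
        · exact (hBd' i hi).1 h
        · have h1 := hhalf i (by simp [h] : i ∈ U ∪ D ∪ B)
          have h2 := hhalf _ (by simp [hi] : Nz + 1 - i ∈ U ∪ D ∪ B)
          omega
      · rcases hi with hi | hi
        · have h1 := hhalf i (by simp [hi] : i ∈ U ∪ D ∪ B)
          have h2 := hhalf _ (by simp [h] : Nz + 1 - i ∈ U ∪ D ∪ B)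
          omega
        · exact (hBd' _ hi).2 h
    · rw [memD']
      rintro (h | h)
      · rcases hi with hi | hi
        · exact (hBd' i hi).2 h
        · have h1 := hhalf i (by simp [h] : i ∈ U ∪ D ∪ B)
          have h2 := hhalf _ (by simp [hi] : Nz + 1 - i ∈ U ∪ D ∪ B)
          omega
      · rcases hi with hi | hi
        · have h1 := hhalf i (by simp [hi] : i ∈ U ∪ D ∪ B)
          have h2 := hhalf _ (by simp [h] : Nz + 1 - i ∈ U ∪ D ∪ B)
          omega
        · exact (hBd' _ hi).1 h
  -- mid not in anything
  have hmidnot : ∀ W : Finset ℤ, W ⊆ U ∪ D ∪ B → mid ∉ W ∧ Nz + 1 - mid ∉ W := by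
    intro W hW
    have h1 : mid ∉ U ∪ D ∪ B := by
      intro h; have := hhalf mid h; omega
    have h2 : Nz + 1 - mid = mid := by omega
    exact ⟨fun h => h1 (hW h), fun h => by rw [h2] at h; exact h1 (hW h)⟩
  have hmidO : mid ∉ U' ∧ mid ∉ D' ∧ mid ∉ B' := by
    refine ⟨?_, ?_, ?_⟩ <;> [rw [memU']; rw [memD']; rw [memB']] <;> rintro (h | h)
    · exact (hmidnot U (by intro w hw; simp [hw])).1 h
    · exact (hmidnot D (by intro w hw; simp [hw])).1 (by rwa [show Nz + 1 - mid = mid by omega] at h)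
    · exact (hmidnot D (by intro w hw; simp [hw])).1 h
    · exact (hmidnot U (by intro w hw; simp [hw])).1 (by rwa [show Nz + 1 - mid = mid by omega] at h)
    · exact (hmidnot B (by intro w hw; simp [hw])).1 h
    · exact (hmidnot B (by intro w hw; simp [hw])).1 (by rwa [show Nz + 1 - mid = mid by omega] at h)
  -- disjointness of halves for cardinalities
  have hdisjmir : ∀ W₁ W₂ : Finset ℤ, W₁ ⊆ U ∪ D ∪ B → W₂ ⊆ U ∪ D ∪ B →
      Disjoint W₁ (mir Nz W₂) := by
    intro W₁ W₂ h1 h2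
    rw [Finset.disjoint_left]
    intro i hi hIm
    rw [mem_mir] at hIm
    have g1 := hhalf i (h1 hi)
    have g2 := hhalf _ (h2 hIm)
    omega
  have cardU' : U'.card = U.card + D.card := by
    rw [hU', Finset.card_union_of_disjoint
      (hdisjmir U D (by intro w hw; simp [hw]) (by intro w hw; simp [hw])), card_mir]
  have cardD' : D'.card = D.card + U.card := by
    rw [hD', Finset.card_union_of_disjoint
      (hdisjmir D U (by intro w hw; simp [hw]) (by intro w hw; simp [hw])), card_mir]
  have hcard : D'.card = U'.card := by omega
  -- the union O
  have hOeq : U' ∪ D' ∪ B' = O := by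
    rw [hO, mir_union, mir_union]
    ext i
    simp only [hU', hD', hB', Finset.mem_union]
    tauto
  have cardUD : (U ∪ D ∪ B).card = n + b := by
    rw [Finset.union_comm (U ∪ D) B, Finset.card_union_of_disjoint (by
      rw [Finset.disjoint_left]; intro i hi hc
      exact absurd (Finset.mem_inter.2 ⟨hi, hc⟩) (by simp [hBd]))]
    omega
  have cardO : O.card = 2 * (n + b) := by
    rw [hO, Finset.card_union_of_disjoint
      (hdisjmir _ _ (by intro w hw; exact hw) (by intro w hw; exact hw)), card_mir, cardUD]
    ring
  have hOsub : O ⊆ Icc 1 Nz := by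
    rw [hO]
    intro i hi
    rcases Finset.mem_union.1 hi with hi | hi
    · have := hhalf i hi; rw [Finset.mem_Icc]; omega
    · rw [mem_mir] at hi; have := hhalf _ hi; rw [Finset.mem_Icc]; omega
  have hOc : (Icc 1 Nz \ (U' ∪ D' ∪ B')).card = y + 1 := by
    rw [hOeq, Finset.card_sdiff_of_subset hOsub, cardO]
    have hIccN : (Icc (1:ℤ) Nz).card = N := by
      rw [Int.card_Icc, hNz]
      omega
    omega
  -- cardinal bounds
  have hun : U.card ≤ n := by rw [hn]; exact Finset.card_le_card Finset.subset_union_left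
  have hdn : D.card ≤ n := by rw [hn]; exact Finset.card_le_card Finset.subset_union_right
  set aN : ℕ := y + U.card + D.card with haN
  have ha : aN = y + U'.card := by omega
  -- apply aux_half
  have key := aux_half y ⟨y2, hy2⟩ Nz hN1 U' D' B' hUN hDN hBN hUDm hBBm hBdisj mid hmid2
    hmidO aN ha hcard hOc
  -- match the two sides
  have hL : McCS (2 * b + 1) y U D B =
      Mc (Nz, 0) (HRegion Nz (aN : ℤ) (aN : ℤ) ↑U' ↑D') (HBar ↑B') := by
    rw [McCS]
    have hNN : ((2 * b + 1 : ℕ) : ℤ) + (y : ℤ) + 2 * ((U ∪ D).card : ℤ) = Nz := by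
      have : ((U ∪ D).card : ℤ) = (n : ℤ) := by exact_mod_cast hn.symm
      rw [this, hNz]
      push_cast [hN]
      ring
    rw [hNN]
    have hUcard : U' ∪ D' = (U ∪ D) ∪ mir Nz (U ∪ D) := by
      rw [mir_union]
      ext i
      simp only [hU', hD', Finset.mem_union]
      tauto
    have hdisj2 : Disjoint ((U ∪ D : Finset ℤ)) (mir Nz (U ∪ D)) :=
      hdisjmir _ _ Finset.subset_union_left Finset.subset_union_left
    have hcardUD' : (U' ∪ D').card = 2 * n := by
      rw [hUcard, Finset.card_union_of_disjoint hdisj2, card_mir, ← hn]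
      ring
    have e1 : ((2 * b + 1 : ℕ) : ℤ) + (y : ℤ) + ((U' ∪ D').card : ℤ) = Nz := by
      rw [hcardUD', hNz]
      push_cast [hN]
      ring
    have e2 : (y : ℤ) + (U'.card : ℤ) = (aN : ℤ) := by
      rw [cardU']
      push_cast [haN]
      ring
    have e3 : (y : ℤ) + (D'.card : ℤ) = (aN : ℤ) := by
      rw [cardD']
      push_cast [haN]
      ring
    show Mc (Nz, 0)
        (HRegion (((2 * b + 1 : ℕ) : ℤ) + (y : ℤ) + ((U' ∪ D').card : ℤ))
          ((y : ℤ) + (U'.card : ℤ)) ((y : ℤ) + (D'.card : ℤ)) ↑U' ↑D') (HBar ↑B') =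
      Mc (Nz, 0) (HRegion Nz (aN : ℤ) (aN : ℤ) ↑U' ↑D') (HBar ↑B')
    rw [e1, e2, e3]
  have hR : MT ((y + U.card + D.card : ℕ) : ℤ) ((2 * b + 1 + m : ℕ) : ℤ)
        (((Icc (1 : ℤ) Nz \ O) \ {mid}) ∪ U ∪ mir Nz D) =
      MT (aN : ℤ) (Nz - aN) (((Icc 1 Nz \ (U' ∪ D' ∪ B')) \ {mid}) ∪ U') := by
    rw [hOeq]
    have h1 : ((y + U.card + D.card : ℕ) : ℤ) = (aN : ℤ) := by rw [haN]
    have h2 : ((2 * b + 1 + m : ℕ) : ℤ) = Nz - aN := by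
      rw [hNz, haN]
      push_cast [hN, hm]
      omega
    have h3 : ((Icc (1 : ℤ) Nz \ O) \ {mid}) ∪ U ∪ mir Nz D =
        ((Icc 1 Nz \ O) \ {mid}) ∪ U' := by
      rw [hU', Finset.union_assoc]
    rw [h1, h2, h3]
  rw [hL, hR, key]

end Shuf
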